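/- Let a < b, κ ≠ 0 a real constant, ρ : [a,b] → ℝ continuous, and u ∈ C⁴([a,b]). Then the first variation (d/dε)|_{ε=0} S(u + εv) of the beam action vanishes for every v ∈ C²([a,b]) if and only if u satisfies both the Euler–Lagrange equation κ u''''(x) = ρ(x) on [a,b] and the natural boundary conditions u''(a) = u''(b) = 0, u'''(a) = u'''(b) = 0. -/

import Mathlib

open Set

/-- `f` is of class `C²` on `s`, with successive derivatives `f1, f2`. -/
def IsC2On (f f1 f2 : ℝ → ℝ) (s : Set ℝ) : Prop :=
  (∀ x ∈ s, HasDerivWithinAt f (f1 x) s x) ∧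
  (∀ x ∈ s, HasDerivWithinAt f1 (f2 x) s x) ∧
  ContinuousOn f2 s

/-- `f` is of class `C⁴` on `s`, with successive derivatives `f1, f2, f3, f4`. -/
def IsC4On (f f1 f2 f3 f4 : ℝ → ℝ) (s : Set ℝ) : Prop :=
  (∀ x ∈ s, HasDerivWithinAt f (f1 x) s x) ∧
  (∀ x ∈ s, HasDerivWithinAt f1 (f2 x) s x) ∧
  (∀ x ∈ s, HasDerivWithinAt f2 (f3 x) s x) ∧
  (∀ x ∈ s, HasDerivWithinAt f3 (f4 x) s x) ∧
  ContinuousOn f4 s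

open MeasureTheory intervalIntegral in
lemma ftc_icc {a b : ℝ} {f : ℝ → ℝ} (hf : ContinuousOn f (Icc a b))
    {c : ℝ} (hc : c ∈ Icc a b) {x : ℝ} (hx : x ∈ Icc a b) :
    HasDerivWithinAt (fun y => ∫ t in c..y, f t) (f x) (Icc a b) x := by
  haveI : Fact (x ∈ Icc a b) := ⟨hx⟩
  refine integral_hasDerivWithinAt_right ?_ ?_ (hf x hx)
  · exact (hf.mono (uIcc_subset_Icc hc hx)).intervalIntegrable
  · exact ⟨Icc a b, self_mem_nhdsWithin, hf.aestronglyMeasurable measurableSet_Icc⟩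

open MeasureTheory intervalIntegral in
/-- A `C⁴` function `u` is a critical point of the beam action
`S(u) = ∫ₐᵇ (κ u''²/2 − ρ u) dx` for arbitrary `C²` variations (no endpoint
conditions) if and only if it satisfies both the Euler–Lagrange equation
`κ u'''' = ρ` on `[a,b]` and the natural boundary conditions
`u''(a) = u''(b) = 0`, `u'''(a) = u'''(b) = 0`. -/
theorem beam_free_boundary_critical_iff
    (a b κ : ℝ) (hab : a < b) (hκ : κ ≠ 0)
    (ρ : ℝ → ℝ) (hρ : ContinuousOn ρ (Icc a b))
    (u u1 u2 u3 u4 : ℝ → ℝ) (hu : IsC4On u u1 u2 u3 u4 (Icc a b)) :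
    (∀ v v1 v2 : ℝ → ℝ, IsC2On v v1 v2 (Icc a b) →
      HasDerivAt
        (fun ε : ℝ => ∫ x in a..b,
          (κ * (u2 x + ε * v2 x) ^ 2 / 2 - ρ x * (u x + ε * v x)))
        0 0) ↔
      ((∀ x ∈ Icc a b, κ * u4 x = ρ x) ∧
        u2 a = 0 ∧ u2 b = 0 ∧ u3 a = 0 ∧ u3 b = 0) := by
  obtain ⟨hu1, hu2, hu3, hu4, hu4c⟩ := hu
  have hle : a ≤ b := hab.le
  have huIcc : uIcc a b = Icc a b := uIcc_of_le hle
  have ha_mem : a ∈ Icc a b := left_mem_Icc.2 hle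
  have hb_mem : b ∈ Icc a b := right_mem_Icc.2 hle
  -- integrability from ContinuousOn (Icc a b)
  have intg : ∀ {f : ℝ → ℝ}, ContinuousOn f (Icc a b) → IntervalIntegrable f volume a b := by
    intro f hf
    exact (huIcc ▸ hf : ContinuousOn f (uIcc a b)).intervalIntegrable
  -- continuity of u and its derivatives
  have huc : ContinuousOn u (Icc a b) := fun x hx => (hu1 x hx).continuousWithinAt
  have hu2c : ContinuousOn u2 (Icc a b) := fun x hx => (hu3 x hx).continuousWithinAt
  have hu3c : ContinuousOn u3 (Icc a b) := fun x hx => (hu4 x hx).continuousWithinAt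
  -- antiderivatives of ρ
  set R1 : ℝ → ℝ := fun y => ∫ t in a..y, ρ t with hR1def
  have hR1' : ∀ x ∈ Icc a b, HasDerivWithinAt R1 (ρ x) (Icc a b) x :=
    fun x hx => ftc_icc hρ ha_mem hx
  have hR1c : ContinuousOn R1 (Icc a b) := fun x hx => (hR1' x hx).continuousWithinAt
  set R2 : ℝ → ℝ := fun y => ∫ t in a..y, R1 t with hR2def
  have hR2' : ∀ x ∈ Icc a b, HasDerivWithinAt R2 (R1 x) (Icc a b) x :=
    fun x hx => ftc_icc hR1c ha_mem hx
  have hR2c : ContinuousOn R2 (Icc a b) := fun x hx => (hR2' x hx).continuousWithinAt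
  have hR1a : R1 a = 0 := integral_same
  have hR2a : R2 a = 0 := integral_same
  -- integration by parts
  have ibp : ∀ (f F g g' : ℝ → ℝ), (∀ x ∈ Icc a b, HasDerivWithinAt F (f x) (Icc a b) x) →
      (∀ x ∈ Icc a b, HasDerivWithinAt g (g' x) (Icc a b) x) →
      IntervalIntegrable f volume a b → IntervalIntegrable g' volume a b →
      ∫ x in a..b, (f x * g x + F x * g' x) = F b * g b - F a * g a := by
    intro f F g g' hF hg hf hg'
    exact integral_deriv_mul_eq_sub_of_hasDerivWithinAt
      (fun x hx => huIcc ▸ hF x (huIcc ▸ hx)) (fun x hx => huIcc ▸ hg x (huIcc ▸ hx)) hf hg'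
  -- key identity for the first variation integrand, for any C² variation v
  have key : ∀ v v1 v2 : ℝ → ℝ, IsC2On v v1 v2 (Icc a b) →
      ∫ x in a..b, (κ * u2 x * v2 x - ρ x * v x)
        = (∫ x in a..b, (κ * u2 x - R2 x) * v2 x) - R1 b * v b + R2 b * v1 b := by
    intro v v1 v2 ⟨hv1, hv2, hv2c⟩
    have hvc : ContinuousOn v (Icc a b) := fun x hx => (hv1 x hx).continuousWithinAt
    have hv1c : ContinuousOn v1 (Icc a b) := fun x hx => (hv2 x hx).continuousWithinAt
    have i1 : IntervalIntegrable (fun x => ρ x * v x) volume a b := intg (hρ.mul hvc)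
    have i2 : IntervalIntegrable (fun x => R1 x * v1 x) volume a b := intg (hR1c.mul hv1c)
    have i3 : IntervalIntegrable (fun x => R2 x * v2 x) volume a b := intg (hR2c.mul hv2c)
    have e1 : (∫ x in a..b, ρ x * v x) + ∫ x in a..b, R1 x * v1 x = R1 b * v b := by
      have := ibp ρ R1 v v1 hR1' hv1 (intg hρ) (intg hv1c)
      rw [integral_add i1 i2] at this
      rw [this, hR1a, zero_mul, sub_zero]
    have e2 : (∫ x in a..b, R1 x * v1 x) + ∫ x in a..b, R2 x * v2 x = R2 b * v1 b := by
      have := ibp R1 R2 v1 v2 hR2' hv2 (intg hR1c) (intg hv2c)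
      rw [integral_add i2 i3] at this
      rw [this, hR2a, zero_mul, sub_zero]
    have iu : IntervalIntegrable (fun x => κ * u2 x * v2 x) volume a b :=
      intg (((continuousOn_const.mul hu2c).mul hv2c))
    have esplit : ∫ x in a..b, (κ * u2 x - R2 x) * v2 x
        = (∫ x in a..b, κ * u2 x * v2 x) - ∫ x in a..b, R2 x * v2 x := by
      rw [← integral_sub iu i3]
      exact integral_congr fun x _ => by ring
    rw [integral_sub iu i1, esplit]
    linarith [e1, e2]
  -- the first variation equals B v := ∫ (κ u2 v2 - ρ v)
  have hphi : ∀ v v1 v2 : ℝ → ℝ, IsC2On v v1 v2 (Icc a b) →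
      HasDerivAt
        (fun ε : ℝ => ∫ x in a..b,
          (κ * (u2 x + ε * v2 x) ^ 2 / 2 - ρ x * (u x + ε * v x)))
        (∫ x in a..b, (κ * u2 x * v2 x - ρ x * v x)) 0 := by
    intro v v1 v2 ⟨hv1, hv2, hv2c⟩
    have hvc : ContinuousOn v (Icc a b) := fun x hx => (hv1 x hx).continuousWithinAt
    have i0 : IntervalIntegrable (fun x => κ * u2 x ^ 2 / 2 - ρ x * u x) volume a b :=
      intg (((continuousOn_const.mul (hu2c.pow 2)).div_const 2).sub (hρ.mul huc))
    have i1 : IntervalIntegrable (fun x => κ * u2 x * v2 x - ρ x * v x) volume a b :=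
      intg (((continuousOn_const.mul hu2c).mul hv2c).sub (hρ.mul hvc))
    have i2 : IntervalIntegrable (fun x => κ * v2 x ^ 2 / 2) volume a b :=
      intg ((continuousOn_const.mul (hv2c.pow 2)).div_const 2)
    set A := ∫ x in a..b, (κ * u2 x ^ 2 / 2 - ρ x * u x) with hA
    set B := ∫ x in a..b, (κ * u2 x * v2 x - ρ x * v x) with hB
    set C := ∫ x in a..b, (κ * v2 x ^ 2 / 2) with hC
    have heq : (fun ε : ℝ => ∫ x in a..b,
          (κ * (u2 x + ε * v2 x) ^ 2 / 2 - ρ x * (u x + ε * v x)))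
        = fun ε : ℝ => A + ε * B + ε ^ 2 * C := by
      funext ε
      have : ∫ x in a..b, (κ * (u2 x + ε * v2 x) ^ 2 / 2 - ρ x * (u x + ε * v x))
          = ∫ x in a..b, ((κ * u2 x ^ 2 / 2 - ρ x * u x)
              + (ε * (κ * u2 x * v2 x - ρ x * v x) + ε ^ 2 * (κ * v2 x ^ 2 / 2))) := by
        exact integral_congr fun x _ => by ring
      rw [this, integral_add i0 ((i1.const_mul ε).add (i2.const_mul (ε ^ 2))),
        integral_add (i1.const_mul ε) (i2.const_mul (ε ^ 2)),
        intervalIntegral.integral_const_mul, intervalIntegral.integral_const_mul]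
      ring
    rw [heq]
    have h1 : HasDerivAt (fun ε : ℝ => A + ε * B) B 0 := by
      simpa using ((hasDerivAt_id (0 : ℝ)).mul_const B).const_add A
    have h2 : HasDerivAt (fun ε : ℝ => ε ^ 2 * C) 0 0 := by
      simpa using (hasDerivAt_pow 2 (0 : ℝ)).mul_const C
    have h3 := h1.add h2
    rw [add_zero] at h3
    exact h3
  constructor
  · -- forward direction
    intro H
    have hBzero : ∀ v v1 v2 : ℝ → ℝ, IsC2On v v1 v2 (Icc a b) →
        (∫ x in a..b, (κ * u2 x - R2 x) * v2 x) - R1 b * v b + R2 b * v1 b = 0 := by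
      intro v v1 v2 hv
      rw [← key v v1 v2 hv]
      exact HasDerivAt.unique (hphi v v1 v2 hv) (H v v1 v2 hv)
    -- test function built from w := κ u2 - R2
    set w : ℝ → ℝ := fun x => κ * u2 x - R2 x with hwdef
    have hwc : ContinuousOn w (Icc a b) := (continuousOn_const.mul hu2c).sub hR2c
    set I : ℝ → ℝ := fun y => ∫ t in b..y, w t with hI
    set J : ℝ → ℝ := fun y => ∫ t in b..y, t * w t with hJ
    have hI' : ∀ x ∈ Icc a b, HasDerivWithinAt I (w x) (Icc a b) x :=
      fun x hx => ftc_icc hwc hb_mem hx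
    have hJ' : ∀ x ∈ Icc a b, HasDerivWithinAt J (x * w x) (Icc a b) x :=
      fun x hx => ftc_icc (continuousOn_id.mul hwc) hb_mem hx
    have hvC2 : IsC2On (fun x => x * I x - J x) I w (Icc a b) := by
      refine ⟨fun x hx => ?_, hI', hwc⟩
      have := ((hasDerivWithinAt_id x (Icc a b)).mul (hI' x hx)).sub (hJ' x hx)
      convert this using 1
      · rfl
      · rfl
      · rfl
      · simp
    have hw2 : ∫ x in a..b, (w x) ^ 2 = 0 := by
      have := hBzero _ I w hvC2
      have hIb : I b = 0 := integral_same
      have hJb : J b = 0 := integral_same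
      rw [hIb, hJb] at this
      simp only [mul_zero, sub_zero, zero_sub, neg_zero, add_zero] at this
      calc ∫ x in a..b, (w x) ^ 2 = ∫ x in a..b, (κ * u2 x - R2 x) * w x :=
            integral_congr fun x _ => by rw [hwdef]; ring
        _ = 0 := by linarith [this]
    have hwzero : ∀ x ∈ Icc a b, w x = 0 := by
      have hw2c : ContinuousOn (fun x => (w x) ^ 2) (Icc a b) := hwc.pow 2
      have hint : IntervalIntegrable (fun x => (w x) ^ 2) volume a b := intg hw2c
      have hae : (fun x => (w x) ^ 2) =ᵐ[volume.restrict (Ioc a b)] 0 :=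
        (integral_eq_zero_iff_of_le_of_nonneg_ae hle
          (Filter.Eventually.of_forall fun x => sq_nonneg _) hint).mp hw2
      have hae' : (fun x => (w x) ^ 2) =ᵐ[volume.restrict (Icc a b)] 0 := by
        rwa [← Measure.restrict_congr_set Ioc_ae_eq_Icc]
      have hEq : EqOn (fun x => (w x) ^ 2) 0 (Icc a b) :=
        Measure.eqOn_Icc_of_ae_eq volume hab.ne hae' hw2c continuousOn_const
      intro x hx
      exact (pow_eq_zero_iff two_ne_zero).mp (hEq hx)
    have hu2R2 : ∀ x ∈ Icc a b, κ * u2 x = R2 x := fun x hx =>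
      sub_eq_zero.mp (hwzero x hx)
    have hu3R1 : ∀ x ∈ Icc a b, κ * u3 x = R1 x := by
      intro x hx
      have hud := (uniqueDiffOn_Icc hab) x hx
      have hA : HasDerivWithinAt (fun y => κ * u2 y) (κ * u3 x) (Icc a b) x :=
        (hu3 x hx).const_mul κ
      have hB : HasDerivWithinAt (fun y => κ * u2 y) (R1 x) (Icc a b) x :=
        (hR2' x hx).congr hu2R2 (hu2R2 x hx)
      rw [← hA.derivWithin hud]
      exact hB.derivWithin hud
    have hEL : ∀ x ∈ Icc a b, κ * u4 x = ρ x := by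
      intro x hx
      have hud := (uniqueDiffOn_Icc hab) x hx
      have hA : HasDerivWithinAt (fun y => κ * u3 y) (κ * u4 x) (Icc a b) x :=
        (hu4 x hx).const_mul κ
      have hB : HasDerivWithinAt (fun y => κ * u3 y) (ρ x) (Icc a b) x :=
        (hR1' x hx).congr hu3R1 (hu3R1 x hx)
      rw [← hA.derivWithin hud]
      exact hB.derivWithin hud
    -- boundary values at b via constant and identity test functions
    have hone : IsC2On (fun _ => 1) (fun _ => 0) (fun _ => 0) (Icc a b) := by
      refine ⟨fun x hx => hasDerivWithinAt_const x _ 1, fun x hx => hasDerivWithinAt_const x _ 0,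
        continuousOn_const⟩
    have hid : IsC2On (fun x => x) (fun _ => 1) (fun _ => 0) (Icc a b) := by
      refine ⟨fun x hx => hasDerivWithinAt_id x _, fun x hx => hasDerivWithinAt_const x _ 1,
        continuousOn_const⟩
    have hR1b : R1 b = 0 := by
      have := hBzero _ _ _ hone
      simpa using this
    have hR2b : R2 b = 0 := by
      have := hBzero _ _ _ hid
      simp only [mul_zero, mul_one] at this
      simp only [intervalIntegral.integral_zero, hR1b, zero_mul, zero_sub, neg_zero,
        zero_add] at this
      linarith
    have hκne : ∀ {c : ℝ}, κ * c = 0 → c = 0 := fun h => by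
      rcases mul_eq_zero.mp h with h' | h'
      · exact absurd h' hκ
      · exact h'
    refine ⟨hEL, ?_, ?_, ?_, ?_⟩
    · exact hκne (by rw [hu2R2 a ha_mem, hR2a])
    · exact hκne (by rw [hu2R2 b hb_mem, hR2b])
    · exact hκne (by rw [hu3R1 a ha_mem, hR1a])
    · exact hκne (by rw [hu3R1 b hb_mem, hR1b])
  · -- backward direction
    rintro ⟨hEL, h2a, h2b, h3a, h3b⟩ v v1 v2 hv
    -- κ u3 = R1 and κ u2 = R2 on Icc a b
    have hmem : ∀ {x : ℝ}, x ∈ Ico a b → Icc a b ∈ nhdsWithin x (Ici x) := by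
      intro x hx
      exact mem_nhdsWithin.mpr ⟨Iio b, isOpen_Iio, hx.2,
        fun y hy => ⟨le_trans hx.1 hy.2, le_of_lt hy.1⟩⟩
    have hu3R1 : ∀ x ∈ Icc a b, κ * u3 x - R1 x = 0 := by
      have hcont : ContinuousOn (fun y => κ * u3 y - R1 y) (Icc a b) :=
        (continuousOn_const.mul hu3c).sub hR1c
      have hderiv : ∀ x ∈ Ico a b,
          HasDerivWithinAt (fun y => κ * u3 y - R1 y) 0 (Ici x) x := by
        intro x hx
        have hx' : x ∈ Icc a b := ⟨hx.1, hx.2.le⟩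
        have h := ((hu4 x hx').const_mul κ).sub (hR1' x hx')
        rw [hEL x hx', sub_self] at h
        exact h.mono_of_mem_nhdsWithin (hmem hx)
      have := constant_of_has_deriv_right_zero hcont hderiv
      intro x hx
      rw [this x hx, hR1a, h3a, mul_zero, sub_zero]
    have hu2R2 : ∀ x ∈ Icc a b, κ * u2 x - R2 x = 0 := by
      have hcont : ContinuousOn (fun y => κ * u2 y - R2 y) (Icc a b) :=
        (continuousOn_const.mul hu2c).sub hR2c
      have hderiv : ∀ x ∈ Ico a b,
          HasDerivWithinAt (fun y => κ * u2 y - R2 y) 0 (Ici x) x := by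
        intro x hx
        have hx' : x ∈ Icc a b := ⟨hx.1, hx.2.le⟩
        have h := ((hu3 x hx').const_mul κ).sub (hR2' x hx')
        rw [show R1 x = κ * u3 x from by linarith [hu3R1 x hx'], sub_self] at h
        exact h.mono_of_mem_nhdsWithin (hmem hx)
      have := constant_of_has_deriv_right_zero hcont hderiv
      intro x hx
      rw [this x hx, hR2a, h2a, mul_zero, sub_zero]
    have hR1b : R1 b = 0 := by have := hu3R1 b hb_mem; rw [h3b] at this; linarith
    have hR2b : R2 b = 0 := by have := hu2R2 b hb_mem; rw [h2b] at this; linarith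
    have hBv : (∫ x in a..b, (κ * u2 x * v2 x - ρ x * v x)) = 0 := by
      rw [key v v1 v2 hv, hR1b, hR2b]
      have : ∫ x in a..b, (κ * u2 x - R2 x) * v2 x = ∫ x in a..b, (0 : ℝ) := by
        refine integral_congr fun x hx => ?_
        rw [hu2R2 x (huIcc ▸ hx), zero_mul]
      rw [this]
      simp
    have := hphi v v1 v2 hv
    rwa [hBv] at this
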